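/- No dihedral ordering of N = {±1,...,±n} (n ≥ 3) is both axially symmetric and centrally symmetric. -/

import Mathlib

lemma dih_struct (m : ℕ) (d : Equiv.Perm (ZMod m))
    (hd : d ∈ Subgroup.closure {Equiv.addLeft (1 : ZMod m), Equiv.neg (ZMod m)}) :
    ∃ c : ZMod m, (∀ p, d p = c + p) ∨ (∀ p, d p = c - p) := by
  induction hd using Subgroup.closure_induction with
  | mem x hx =>
      rcases hx with h | h
      · exact ⟨1, Or.inl fun p => by simp [h]⟩
      · rw [Set.mem_singleton_iff] at h
        exact ⟨0, Or.inr fun p => by simp [h, sub_eq_add_neg]⟩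
  | one => exact ⟨0, Or.inl fun p => by simp⟩
  | mul x y hx hy ihx ihy =>
      obtain ⟨a, ha⟩ := ihx; obtain ⟨b, hb⟩ := ihy
      rcases ha with ha | ha <;> rcases hb with hb | hb
      · exact ⟨a + b, Or.inl fun p => by
          rw [Equiv.Perm.mul_apply, hb, ha]; ring⟩
      · exact ⟨a + b, Or.inr fun p => by
          rw [Equiv.Perm.mul_apply, hb, ha]; ring⟩
      · exact ⟨a - b, Or.inr fun p => by
          rw [Equiv.Perm.mul_apply, hb, ha]; ring⟩
      · exact ⟨a - b, Or.inl fun p => by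
          rw [Equiv.Perm.mul_apply, hb, ha]; ring⟩
  | inv x hx ihx =>
      obtain ⟨a, ha | ha⟩ := ihx
      · exact ⟨-a, Or.inl fun p => x.injective (by
          rw [Equiv.Perm.inv_def, Equiv.apply_symm_apply, ha]; ring)⟩
      · exact ⟨a, Or.inr fun p => x.injective (by
          rw [Equiv.Perm.inv_def, Equiv.apply_symm_apply, ha]; ring)⟩

/-- For `n ≥ 3`, no dihedral ordering of `N = {±1, …, ±n}` is both axially
symmetric and centrally symmetric: no bijection `σ : ℤ/2nℤ → N` has both a dihedral shift
satisfying the axial condition `σ(p) = -σ(-1-p)` and a dihedral shift satisfying the central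
condition `σ(p + n) = -σ(p)`. -/
theorem no_ordering_both_axially_and_centrally_symmetric (n : ℕ) (hn : 3 ≤ n) :
    let N := {i : ℤ // i ≠ 0 ∧ i.natAbs ≤ n}
    let Dih : Subgroup (Equiv.Perm (ZMod (2 * n))) :=
      Subgroup.closure {Equiv.addLeft (1 : ZMod (2 * n)), Equiv.neg (ZMod (2 * n))}
    let axial : (ZMod (2 * n) ≃ N) → Prop := fun σ =>
      ∀ p : ZMod (2 * n), ((σ p : ℤ)) = -((σ (-1 - p) : ℤ))
    let central : (ZMod (2 * n) ≃ N) → Prop := fun σ =>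
      ∀ p : ZMod (2 * n), ((σ (p + (n : ZMod (2 * n))) : ℤ)) = -((σ p : ℤ))
    ¬ ∃ σ : ZMod (2 * n) ≃ N,
      (∃ d ∈ Dih, axial ((d : Equiv.Perm (ZMod (2 * n))).trans σ)) ∧
      (∃ d ∈ Dih, central ((d : Equiv.Perm (ZMod (2 * n))).trans σ)) := by
  intro N Dih axial central
  rintro ⟨σ, ⟨d1, hd1, hax⟩, ⟨d2, hd2, hcen⟩⟩
  obtain ⟨c1, hc1⟩ := dih_struct _ d1 hd1
  obtain ⟨c2, hc2⟩ := dih_struct _ d2 hd2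
  have h2n : (n : ZMod (2 * n)) + n = 0 := by
    have h := ZMod.natCast_self (2 * n)
    push_cast at h
    linear_combination h
  -- axial gives ∃ k, σ (k - q) = -σ q
  have hA : ∃ k : ZMod (2 * n), ∀ q, ((σ (k - q) : ℤ)) = -((σ q : ℤ)) := by
    rcases hc1 with h | h
    · refine ⟨c1 + c1 - 1, fun q => ?_⟩
      have hx := hax (q - c1)
      simp only [Equiv.trans_apply, h] at hx
      rw [show c1 + (q - c1) = q by ring,
        show c1 + (-1 - (q - c1)) = c1 + c1 - 1 - q by ring] at hx
      linarith
    · refine ⟨c1 + c1 + 1, fun q => ?_⟩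
      have hx := hax (c1 - q)
      simp only [Equiv.trans_apply, h] at hx
      rw [show c1 - (c1 - q) = q by ring,
        show c1 - (-1 - (c1 - q)) = c1 + c1 + 1 - q by ring] at hx
      linarith
  -- central gives σ (q + n) = -σ q
  have hC : ∀ q : ZMod (2 * n), ((σ (q + n) : ℤ)) = -((σ q : ℤ)) := by
    rcases hc2 with h | h
    · intro q
      have hx := hcen (q - c2)
      simp only [Equiv.trans_apply, h] at hx
      rw [show c2 + (q - c2 + n) = q + n by ring,
        show c2 + (q - c2) = q by ring] at hx
      exact hx
    · intro q
      have hx := hcen (c2 - q)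
      simp only [Equiv.trans_apply, h] at hx
      rw [show c2 - (c2 - q + n) = q + n by linear_combination -h2n,
        show c2 - (c2 - q) = q by ring] at hx
      exact hx
  obtain ⟨k, hk⟩ := hA
  have key : ∀ q : ZMod (2 * n), k - q = q + n := by
    intro q
    have h1 : ((σ (k - q) : ℤ)) = ((σ (q + n) : ℤ)) := by rw [hk q, hC q]
    exact σ.injective (Subtype.coe_injective h1)
  have e0 := key 0
  have e1 := key 1
  have h2 : ((2 : ℕ) : ZMod (2 * n)) = 0 := by
    push_cast
    linear_combination e0 - e1
  have : NeZero (2 * n) := ⟨by omega⟩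
  have hdvd := (ZMod.natCast_eq_zero_iff 2 (2 * n)).mp h2
  have := Nat.le_of_dvd (by norm_num) hdvd
  omega
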